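/- arXiv:1707.01227 — 2 statements merged into one kernel-verified Lean document; each statement's English description precedes it below -/
import Mathlib

section
/- For every real number α, the equation 2x - 1 = tanh(α x²) has exactly one solution x in the open interval (0,1). -/
open Real Set

/-- Key inequality: `log r < (r+1)/2` for `r > 0`. -/
lemma log_lt_half_add (r : ℝ) (hr : 0 < r) : Real.log r < (r + 1) / 2 := by
  have h4 : (r / 4 : ℝ) ≠ 0 := by positivity
  have hexp : r / 4 + 1 < Real.exp (r / 4) := Real.add_one_lt_exp h4
  have hsq : Real.exp (r / 4) * Real.exp (r / 4) = Real.exp (r / 2) := by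
    rw [← Real.exp_add]; ring_nf
  have hpos : (0:ℝ) < r / 4 + 1 := by positivity
  have h5 : (r / 4 + 1) * (r / 4 + 1) < Real.exp (r / 4) * Real.exp (r / 4) :=
    mul_lt_mul'' hexp hexp hpos.le hpos.le
  have hlt : r < Real.exp (r / 2) := by
    nlinarith [h5, hsq, sq_nonneg (r / 4 - 1)]
  have : Real.log r < r / 2 := (Real.log_lt_iff_lt_exp hr).2 hlt
  linarith

/-- `tanh t` in terms of `exp`. -/
lemma tanh_eq_exp (t : ℝ) :
    Real.tanh t = (Real.exp t - Real.exp (-t)) / (Real.exp t + Real.exp (-t)) := by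
  rw [Real.tanh_eq_sinh_div_cosh, Real.sinh_eq, Real.cosh_eq]
  have h : Real.exp t + Real.exp (-t) ≠ 0 := by positivity
  field_simp

lemma tanh_lt_one (t : ℝ) : Real.tanh t < 1 := by
  rw [tanh_eq_exp]
  have h1 : (0:ℝ) < Real.exp t + Real.exp (-t) := by positivity
  rw [div_lt_one h1]
  have := Real.exp_pos (-t)
  linarith

lemma neg_one_lt_tanh (t : ℝ) : -1 < Real.tanh t := by
  rw [tanh_eq_exp]
  have h1 : (0:ℝ) < Real.exp t + Real.exp (-t) := by positivity
  rw [lt_div_iff₀ h1]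
  have := Real.exp_pos t
  linarith

lemma continuous_tanh' : Continuous Real.tanh := by
  have : Real.tanh = fun x => Real.sinh x / Real.cosh x := by
    funext x; exact Real.tanh_eq_sinh_div_cosh x
  rw [this]
  exact Real.continuous_sinh.div Real.continuous_cosh fun x => (Real.cosh_pos x).ne'

noncomputable def F (x : ℝ) : ℝ := (Real.log x - Real.log (1 - x)) / (2 * x ^ 2)

/-- On `(0,1)` the equation is equivalent to `F x = α`. -/
lemma equiv_F (α x : ℝ) (hx : x ∈ Set.Ioo (0:ℝ) 1) :
    (2 * x - 1 = Real.tanh (α * x ^ 2)) ↔ F x = α := by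
  obtain ⟨hx0, hx1⟩ := hx
  have hx1' : 0 < 1 - x := by linarith
  set t := α * x ^ 2 with ht
  have hE : (0:ℝ) < Real.exp t := Real.exp_pos t
  have step1 : (2 * x - 1 = Real.tanh t) ↔ Real.exp (2 * t) * (1 - x) = x := by
    rw [tanh_eq_exp]
    have hd : Real.exp t + Real.exp (-t) ≠ 0 := by positivity
    have hsq : Real.exp t * Real.exp t = Real.exp (2 * t) := by
      rw [← Real.exp_add]; ring_nf
    have hinv : Real.exp (-t) = (Real.exp t)⁻¹ := Real.exp_neg t
    rw [eq_div_iff hd]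
    constructor
    · intro h
      have h' : (2 * x - 1) * (Real.exp t * Real.exp t + 1) =
          Real.exp t * Real.exp t - 1 := by
        have hne : Real.exp t ≠ 0 := hE.ne'
        have hm : Real.exp t * (Real.exp t)⁻¹ = 1 := mul_inv_cancel₀ hne
        rw [hinv] at h
        linear_combination (Real.exp t) * h - 2 * x * hm
      rw [← hsq]; nlinarith [h']
    · intro h
      rw [← hsq] at h
      have hne : Real.exp t ≠ 0 := hE.ne'
      have hm : Real.exp t * (Real.exp t)⁻¹ = 1 := mul_inv_cancel₀ hne
      rw [hinv]
      linear_combination (-2 * (Real.exp t)⁻¹) * h + 2 * Real.exp t * (1 - x) * hm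
  have step2 : (Real.exp (2 * t) * (1 - x) = x) ↔
      2 * t = Real.log x - Real.log (1 - x) := by
    constructor
    · intro h
      have hx' : Real.exp (2 * t) = x / (1 - x) := by
        field_simp at h ⊢; linarith
      have := congrArg Real.log hx'
      rwa [Real.log_exp, Real.log_div hx0.ne' hx1'.ne'] at this
    · intro h
      have : Real.exp (2 * t) = x / (1 - x) := by
        rw [h, ← Real.log_div hx0.ne' hx1'.ne', Real.exp_log (by positivity)]
      rw [this]; field_simp
  have step3 : (2 * t = Real.log x - Real.log (1 - x)) ↔ F x = α := by
    unfold F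
    rw [ht]
    have hx2 : (2 * x ^ 2 : ℝ) ≠ 0 := by positivity
    rw [div_eq_iff hx2]
    constructor <;> intro h <;> linarith
  rw [step1, step2, step3]

lemma F_strictMono : StrictMonoOn F (Set.Ioo (0:ℝ) 1) := by
  apply strictMonoOn_of_deriv_pos (convex_Ioo 0 1)
  · -- continuity
    apply ContinuousOn.div
    · apply ContinuousOn.sub
      · exact Real.continuousOn_log.comp continuousOn_id fun x hx => by
          simp; exact hx.1.ne'
      · apply Real.continuousOn_log.comp (by fun_prop)
        intro x hx
        simp only [Set.mem_compl_iff, Set.mem_singleton_iff]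
        have : (0:ℝ) < 1 - x := by linarith [hx.2]
        exact this.ne'
    · fun_prop
    · intro x hx
      have : (0:ℝ) < x := hx.1
      positivity
  · intro x hx
    rw [interior_Ioo] at hx
    obtain ⟨hx0, hx1⟩ := hx
    have hx1' : 0 < 1 - x := by linarith
    -- compute derivative
    have h1 : HasDerivAt Real.log x⁻¹ x := Real.hasDerivAt_log hx0.ne'
    have hinner : HasDerivAt (fun y : ℝ => 1 - y) (-1) x := by
      simpa using (hasDerivAt_id x).const_sub (1:ℝ)
    have h2 : HasDerivAt (fun y : ℝ => Real.log (1 - y)) ((1 - x)⁻¹ * (-1)) x :=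
      (Real.hasDerivAt_log hx1'.ne').comp x hinner
    have hN : HasDerivAt (fun y : ℝ => Real.log y - Real.log (1 - y))
        (x⁻¹ - (1 - x)⁻¹ * (-1)) x := h1.sub h2
    have hD : HasDerivAt (fun y : ℝ => 2 * y ^ 2) (2 * (2 * x ^ 1)) x :=
      (hasDerivAt_pow 2 x).const_mul 2
    have hD0 : (2 * x ^ 2 : ℝ) ≠ 0 := by positivity
    have hF : HasDerivAt F
        (((x⁻¹ - (1 - x)⁻¹ * (-1)) * (2 * x ^ 2) -
          (Real.log x - Real.log (1 - x)) * (2 * (2 * x ^ 1))) / (2 * x ^ 2) ^ 2) x :=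
      hN.div hD hD0
    rw [hF.deriv]
    apply div_pos
    · -- numerator positive
      have hr : 0 < x / (1 - x) := by positivity
      have hkey := log_lt_half_add (x / (1 - x)) hr
      have hlog : Real.log (x / (1 - x)) = Real.log x - Real.log (1 - x) :=
        Real.log_div hx0.ne' hx1'.ne'
      rw [hlog] at hkey
      -- hkey : log x - log (1-x) < (x/(1-x) + 1)/2
      have hxne : x ≠ 0 := hx0.ne'
      have h1x : (1 - x) ≠ 0 := hx1'.ne'
      have hb : (x / (1 - x) + 1) / 2 = 1 / (2 * (1 - x)) := by
        field_simp; ring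
      rw [hb] at hkey
      have hNlt : Real.log x - Real.log (1 - x) < 1 / (2 * (1 - x)) := hkey
      have hexp : (x⁻¹ - (1 - x)⁻¹ * (-1)) * (2 * x ^ 2) =
          2 * x + 2 * x ^ 2 / (1 - x) := by
        field_simp; ring
      rw [hexp]
      have h2x1 : (2 * (2 * x ^ 1) : ℝ) = 4 * x := by ring
      rw [h2x1]
      -- need: 2x + 2x²/(1-x) - 4x·N > 0 where N < 1/(2(1-x))
      have key2 : (Real.log x - Real.log (1 - x)) * (4 * x) <
          (1 / (2 * (1 - x))) * (4 * x) :=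
        mul_lt_mul_of_pos_right hNlt (by positivity)
      have heq1 : (1 / (2 * (1 - x))) * (4 * x) = 2 * x / (1 - x) := by
        field_simp; ring
      have heq2 : 2 * x + 2 * x ^ 2 / (1 - x) = 2 * x / (1 - x) := by
        field_simp; ring
      rw [heq1] at key2
      rw [heq2]
      linarith
    · positivity

theorem stmt_3 (α : ℝ) :
    ∃! x : ℝ, x ∈ Set.Ioo (0 : ℝ) 1 ∧ 2 * x - 1 = Real.tanh (α * x ^ 2) := by
  -- existence via IVT
  have hcont : ContinuousOn (fun x : ℝ => 2 * x - 1 - Real.tanh (α * x ^ 2))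
      (Set.Icc (0:ℝ) 1) := by
    apply Continuous.continuousOn
    exact ((continuous_const.mul continuous_id).sub continuous_const).sub
      (continuous_tanh'.comp (continuous_const.mul (continuous_pow 2)))
  have h0 : (fun x : ℝ => 2 * x - 1 - Real.tanh (α * x ^ 2)) 0 = -1 := by
    simp [Real.tanh_eq_sinh_div_cosh]
  have h1 : (0:ℝ) < (fun x : ℝ => 2 * x - 1 - Real.tanh (α * x ^ 2)) 1 := by
    simp only
    have := _root_.tanh_lt_one (α * 1 ^ 2)
    linarith
  have hIVT := intermediate_value_Ioo (le_of_lt one_pos) hcont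
  have hmem : (0:ℝ) ∈ Set.Ioo ((fun x : ℝ => 2 * x - 1 - Real.tanh (α * x ^ 2)) 0)
      ((fun x : ℝ => 2 * x - 1 - Real.tanh (α * x ^ 2)) 1) := by
    rw [h0]; exact ⟨by norm_num, h1⟩
  obtain ⟨x, hx, hfx⟩ := hIVT hmem
  have hfx' : 2 * x - 1 - Real.tanh (α * x ^ 2) = 0 := hfx
  refine ⟨x, ⟨hx, by linarith⟩, ?_⟩
  rintro y ⟨hy, hey⟩
  have hFy : F y = α := (equiv_F α y hy).1 hey
  have hFx : F x = α := (equiv_F α x hx).1 (by linarith)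
  exact F_strictMono.injOn hy hx (hFy.trans hFx.symm)
end

section
/- Let φ : [0,1] → [0,1] be continuous and increasing, and suppose x₀ ∈ [0,1] is the unique solution of φ(x) = x. Assume additionally φ is differentiable at x₀ with φ'(x₀) < 1. Then D := sup_{x ∈ [0,1], x ≠ x₀} |φ(x) - x₀| / |x - x₀| satisfies D < 1. -/
theorem stmt_5 (φ : ℝ → ℝ) (x₀ φ' : ℝ)
    (hmaps : Set.MapsTo φ (Set.Icc 0 1) (Set.Icc 0 1))
    (hcont : ContinuousOn φ (Set.Icc 0 1))
    (hmono : MonotoneOn φ (Set.Icc 0 1))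
    (hx₀ : x₀ ∈ Set.Icc (0 : ℝ) 1) (hfix : φ x₀ = x₀)
    (huniq : ∀ x ∈ Set.Icc (0 : ℝ) 1, φ x = x → x = x₀)
    (hderiv : HasDerivAt φ φ' x₀) (hφ' : φ' < 1) :
    ∃ D < (1 : ℝ), ∀ x ∈ Set.Icc (0 : ℝ) 1, x ≠ x₀ →
      |φ x - x₀| ≤ D * |x - x₀| := by
  obtain ⟨hx0l, hx0r⟩ := hx₀
  -- pointwise strict contraction away from x₀
  have key : ∀ x ∈ Set.Icc (0:ℝ) 1, x ≠ x₀ → |φ x - x₀| < |x - x₀| := by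
    intro x hx hne
    obtain ⟨hxl, hxr⟩ := hx
    rcases lt_or_gt_of_ne hne with hlt | hgt
    · -- x < x₀ : x₀ ≥ φ x > x
      have h1 : φ x ≤ x₀ := by
        have := hmono ⟨hxl, hxr⟩ ⟨hx0l, hx0r⟩ hlt.le
        linarith [hfix ▸ this]
      have h2 : x < φ x := by
        by_contra h
        push_neg at h
        rcases eq_or_lt_of_le h with heq | hlt2
        · exact hne (huniq x ⟨hxl, hxr⟩ heq)
        · -- IVT on [0, x] for g t = φ t - t
          have hc : ContinuousOn (fun t => φ t - t) (Set.Icc 0 x) :=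
            (hcont.mono (Set.Icc_subset_Icc le_rfl hxr)).sub continuousOn_id
          have h0 : (0:ℝ) ≤ φ 0 - 0 := by
            have := (hmaps ⟨le_rfl, by linarith⟩).1; simpa using this
          have hmem : (0:ℝ) ∈ Set.Icc (φ x - x) (φ 0 - 0) := ⟨by linarith, h0⟩
          obtain ⟨y, hy, hy0⟩ := intermediate_value_Icc' hxl hc hmem
          have hyfix : φ y = y := by linarith [sub_eq_zero.mp hy0]
          have : y = x₀ := huniq y ⟨hy.1, le_trans hy.2 hxr⟩ hyfix
          linarith [hy.2, this ▸ hy.2]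
      rw [abs_of_nonpos (by linarith), abs_of_neg (by linarith)]
      linarith
    · -- x > x₀ : x₀ ≤ φ x < x
      have h1 : x₀ ≤ φ x := by
        have := hmono ⟨hx0l, hx0r⟩ ⟨hxl, hxr⟩ hgt.le
        linarith [hfix ▸ this]
      have h2 : φ x < x := by
        by_contra h
        push_neg at h
        rcases eq_or_lt_of_le h with heq | hlt2
        · exact hne (huniq x ⟨hxl, hxr⟩ heq.symm)
        · have hc : ContinuousOn (fun t => φ t - t) (Set.Icc x 1) :=
            (hcont.mono (Set.Icc_subset_Icc hxl le_rfl)).sub continuousOn_id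
          have h1' : φ 1 - 1 ≤ 0 := by
            have := (hmaps ⟨by linarith, le_rfl⟩).2; linarith
          have hmem : (0:ℝ) ∈ Set.Icc (φ 1 - 1) (φ x - x) := ⟨h1', by linarith⟩
          obtain ⟨y, hy, hy0⟩ := intermediate_value_Icc' hxr hc hmem
          have hyfix : φ y = y := by linarith [sub_eq_zero.mp hy0]
          have : y = x₀ := huniq y ⟨le_trans hxl hy.1, hy.2⟩ hyfix
          linarith [hy.1, this ▸ hy.1]
      rw [abs_of_nonneg (by linarith), abs_of_pos (by linarith)]
      linarith
  set c : ℝ := max φ' 0 with hc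
  have hc1 : c < 1 := max_lt hφ' one_pos
  have hc0 : 0 ≤ c := le_max_right _ _
  set ε : ℝ := (1 - c) / 2 with hε
  have hεpos : 0 < ε := by simp only [hε]; linarith
  set D₁ : ℝ := c + ε with hD₁
  have hD₁lt : D₁ < 1 := by simp only [hD₁, hε]; linarith
  -- get δ from differentiability
  have hlo := hderiv.isLittleO
  rw [Asymptotics.isLittleO_iff] at hlo
  have hev := hlo hεpos
  rw [Metric.eventually_nhds_iff] at hev
  obtain ⟨δ, hδpos, hδ⟩ := hev
  -- near bound
  have near : ∀ x ∈ Set.Icc (0:ℝ) 1, |x - x₀| < δ → |φ x - x₀| ≤ D₁ * |x - x₀| := by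
    intro x hx hxδ
    have hd : dist x x₀ < δ := by rwa [Real.dist_eq]
    have hb := hδ hd
    simp only [Real.norm_eq_abs, ContinuousLinearMap.smulRight_apply, ContinuousLinearMap.one_apply, smul_eq_mul, hfix] at hb
    have hb' := abs_le.mp hb
    have hφ'c : φ' ≤ c := le_max_left _ _
    rcases le_or_gt x₀ x with hge | hlt
    · have h1 : x₀ ≤ φ x := by
        have := hmono ⟨hx0l, hx0r⟩ hx hge
        linarith [hfix ▸ this]
      rw [abs_of_nonneg (by linarith), abs_of_nonneg (by linarith)]
      rw [abs_of_nonneg (by linarith : (0:ℝ) ≤ x - x₀)] at hb'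
      nlinarith [hb'.2]
    · have h1 : φ x ≤ x₀ := by
        have := hmono hx ⟨hx0l, hx0r⟩ hlt.le
        linarith [hfix ▸ this]
      rw [abs_of_nonpos (by linarith), abs_of_nonpos (by linarith)]
      rw [abs_of_nonpos (by linarith : x - x₀ ≤ 0)] at hb'
      nlinarith [hb'.1]
  -- far region
  set K : Set ℝ := Set.Icc 0 1 ∩ {x | δ ≤ |x - x₀|} with hK
  by_cases hKne : K.Nonempty
  · have hKc : IsCompact K := by
      apply isCompact_Icc.inter_right
      have : {x : ℝ | δ ≤ |x - x₀|} = (fun x => |x - x₀|) ⁻¹' Set.Ici δ := rfl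
      rw [this]
      exact IsClosed.preimage ((continuous_id.sub continuous_const).abs) isClosed_Ici
    have hrcont : ContinuousOn (fun x => |φ x - x₀| / |x - x₀|) K := by
      apply ContinuousOn.div
      · exact ((hcont.mono (Set.inter_subset_left)).sub continuousOn_const).abs
      · exact ((continuous_id.sub continuous_const).abs).continuousOn
      · intro x hx
        have := hx.2
        simp only [Set.mem_setOf_eq] at this
        exact ne_of_gt (lt_of_lt_of_le hδpos this)
    obtain ⟨z, hzK, hzmax⟩ := hKc.exists_isMaxOn hKne hrcont
    have hzne : z ≠ x₀ := by
      intro h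
      have := hzK.2
      simp only [Set.mem_setOf_eq, h, sub_self, abs_zero] at this
      linarith
    have hzlt : |φ z - x₀| / |z - x₀| < 1 := by
      rw [div_lt_one (abs_pos.mpr (sub_ne_zero.mpr hzne))]
      exact key z hzK.1 hzne
    refine ⟨max D₁ (|φ z - x₀| / |z - x₀|), max_lt hD₁lt hzlt, ?_⟩
    intro x hx hne
    rcases lt_or_ge (|x - x₀|) δ with hlt | hge
    · calc |φ x - x₀| ≤ D₁ * |x - x₀| := near x hx hlt
        _ ≤ max D₁ _ * |x - x₀| := by
          apply mul_le_mul_of_nonneg_right (le_max_left _ _) (abs_nonneg _)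
    · have hxK : x ∈ K := ⟨hx, hge⟩
      have hr := hzmax hxK
      have hpos : 0 < |x - x₀| := abs_pos.mpr (sub_ne_zero.mpr hne)
      have : |φ x - x₀| / |x - x₀| ≤ |φ z - x₀| / |z - x₀| := hr
      calc |φ x - x₀| = (|φ x - x₀| / |x - x₀|) * |x - x₀| := by
            field_simp
        _ ≤ (|φ z - x₀| / |z - x₀|) * |x - x₀| :=
            mul_le_mul_of_nonneg_right this (abs_nonneg _)
        _ ≤ max D₁ _ * |x - x₀| :=
            mul_le_mul_of_nonneg_right (le_max_right _ _) (abs_nonneg _)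
  · refine ⟨D₁, hD₁lt, ?_⟩
    intro x hx hne
    rcases lt_or_ge (|x - x₀|) δ with hlt | hge
    · exact near x hx hlt
    · exact absurd (⟨x, hx, hge⟩ : K.Nonempty) hKne
end
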